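/- For α > 2, δ := 2/α, θ > 0, 0 ≤ p ≤ 1, and a natural number b ≥ 1, the following identity holds: ∫₀¹ (1 - (1 - pθr^α/(1+θr^α))^b)·r^{-3} dr = Σ_{k=1}^{b} C(b,k)·(-(-pθ)^k/(kα - 2))·₂F₁(k, k-δ; k-δ+1; -θ), where ₂F₁(k, k-δ; k-δ+1; -θ) := (k-δ)·∫₀¹ t^{k-δ-1}/(1+θt)^k dt. -/

import Mathlib

open MeasureTheory Set Real

lemma img_rpow {α : ℝ} (hα : 0 < α) : (fun r : ℝ => r ^ α) '' Ioo 0 1 = Ioo 0 1 := by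
  apply subset_antisymm
  · rintro t ⟨r, ⟨hr0, hr1⟩, rfl⟩
    exact ⟨Real.rpow_pos_of_pos hr0 α, Real.rpow_lt_one hr0.le hr1 hα⟩
  · rintro t ⟨ht0, ht1⟩
    refine ⟨t ^ α⁻¹, ⟨Real.rpow_pos_of_pos ht0 _, Real.rpow_lt_one ht0.le ht1 (by positivity)⟩, ?_⟩
    exact Real.rpow_inv_rpow ht0.le hα.ne'

lemma subst_rpow (α θ : ℝ) (hα : 2 < α) (hθ : 0 < θ) (k : ℕ) (hk : 1 ≤ k) :
    (∫ t in Ioo (0:ℝ) 1, t ^ ((k : ℝ) - 2/α - 1) / (1 + θ * t) ^ k)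
      = α * ∫ r in Ioo (0:ℝ) 1, r ^ ((k : ℝ) * α - 3) / (1 + θ * r ^ α) ^ k := by
  have hα0 : (0:ℝ) < α := by linarith
  have hderiv : ∀ x ∈ Ioo (0:ℝ) 1, HasDerivWithinAt (fun r : ℝ => r ^ α)
      (α * x ^ (α - 1)) (Ioo 0 1) x := fun x hx =>
    (Real.hasDerivAt_rpow_const (Or.inl hx.1.ne')).hasDerivWithinAt
  have hinj : InjOn (fun r : ℝ => r ^ α) (Ioo 0 1) := by
    intro x hx y hy hxy
    have := congrArg (fun z : ℝ => z ^ α⁻¹) hxy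
    simpa [Real.rpow_rpow_inv hx.1.le hα0.ne', Real.rpow_rpow_inv hy.1.le hα0.ne'] using this
  have key := integral_image_eq_integral_abs_deriv_smul measurableSet_Ioo hderiv hinj
    (fun t => t ^ ((k : ℝ) - 2/α - 1) / (1 + θ * t) ^ k)
  rw [img_rpow hα0] at key
  rw [key, ← MeasureTheory.integral_const_mul]
  apply setIntegral_congr_fun measurableSet_Ioo
  intro r hr
  have hr0 : (0:ℝ) < r := hr.1
  have habs : |α * r ^ (α - 1)| = α * r ^ (α - 1) := by
    rw [abs_of_pos]; positivity
  simp only [smul_eq_mul]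
  rw [habs, ← Real.rpow_mul hr0.le]
  have hexp : α - 1 + α * ((k:ℝ) - 2/α - 1) = (k:ℝ) * α - 3 := by
    field_simp
    ring
  have hmul : r ^ (α - 1) * r ^ (α * ((k:ℝ) - 2/α - 1)) = r ^ ((k:ℝ) * α - 3) := by
    rw [← Real.rpow_add hr0, hexp]
  rw [← hmul]
  ring

lemma integrable_term (α θ : ℝ) (hα : 2 < α) (hθ : 0 < θ) (k : ℕ) (hk : 1 ≤ k) :
    IntegrableOn (fun r : ℝ => r ^ ((k : ℝ) * α - 3) / (1 + θ * r ^ α) ^ k)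
      (Ioo 0 1) volume := by
  have hg : IntegrableOn (fun r : ℝ => r ^ ((k : ℝ) * α - 3)) (Ioo 0 1) volume := by
    have h1 : (-1 : ℝ) < (k : ℝ) * α - 3 := by
      have : (1:ℝ) ≤ (k:ℝ) := by exact_mod_cast hk
      nlinarith
    have := (intervalIntegral.intervalIntegrable_rpow' (a := 0) (b := 1) h1)
    rw [intervalIntegrable_iff_integrableOn_Ioo_of_le (by norm_num)] at this
    exact this
  apply hg.mono' ?_ ?_
  · have hc : ContinuousOn (fun r : ℝ => r ^ ((k : ℝ) * α - 3) / (1 + θ * r ^ α) ^ k)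
        (Ioo 0 1) := by
      apply ContinuousOn.div
      · exact continuousOn_id.rpow_const (fun x hx => Or.inl hx.1.ne')
      · exact (continuousOn_const.add (continuousOn_const.mul
          (continuousOn_id.rpow_const (fun x hx => Or.inl hx.1.ne')))).pow k
      · intro x hx
        have hx0 : (0:ℝ) < x := hx.1
        positivity
    exact hc.aestronglyMeasurable measurableSet_Ioo
  · filter_upwards [ae_restrict_mem measurableSet_Ioo] with r hr
    have hr0 : (0:ℝ) < r := hr.1
    have hA : (1:ℝ) ≤ 1 + θ * r ^ α := by
      have : 0 ≤ θ * r ^ α := by positivity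
      linarith
    rw [norm_div, Real.norm_eq_abs, Real.norm_eq_abs, abs_of_pos (Real.rpow_pos_of_pos hr0 _),
      abs_of_pos (by positivity : (0:ℝ) < (1 + θ * r ^ α) ^ k)]
    apply div_le_self (Real.rpow_pos_of_pos hr0 _).le
    exact one_le_pow₀ hA

lemma expand_pt (α θ p : ℝ) (b : ℕ) (hθ : 0 < θ) (r : ℝ) (hr : r ∈ Ioo (0:ℝ) 1) :
    (1 - (1 - p * θ * r ^ α / (1 + θ * r ^ α)) ^ b) * r ^ (-(3 : ℝ))
      = ∑ k ∈ Finset.Icc 1 b, (b.choose k : ℝ) * (-(-(p * θ)) ^ k) *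
          (r ^ ((k : ℝ) * α - 3) / (1 + θ * r ^ α) ^ k) := by
  have hr0 : (0:ℝ) < r := hr.1
  have hA : (0:ℝ) < 1 + θ * r ^ α := by positivity
  set x : ℝ := p * θ * r ^ α / (1 + θ * r ^ α) with hx
  have h1 : (1 - x) ^ b = ∑ k ∈ Finset.range (b + 1), (-x) ^ k * (b.choose k : ℝ) := by
    rw [show (1:ℝ) - x = -x + 1 by ring, add_pow]
    simp
  have h2 : (1 : ℝ) - (1 - x) ^ b
      = ∑ i ∈ Finset.range b, (-((-x) ^ (i + 1))) * (b.choose (i + 1) : ℝ) := by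
    rw [h1, Finset.sum_range_succ']
    simp
  rw [h2, Finset.sum_mul, ← Finset.Ico_add_one_right_eq_Icc, Finset.sum_Ico_eq_sum_range]
  simp only [Nat.add_sub_cancel, Nat.succ_sub_one]
  apply Finset.sum_congr rfl
  intro i _
  have hxk : (-x) ^ (i + 1) = (-(p * θ)) ^ (i + 1) * (r ^ α) ^ (i + 1) / (1 + θ * r ^ α) ^ (i + 1) := by
    rw [hx, ← mul_pow, ← div_pow]
    congr 1
    field_simp
  have hrp : (r ^ α) ^ (i + 1) * r ^ (-(3:ℝ)) = r ^ (((i + 1 : ℕ) : ℝ) * α - 3) := by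
    rw [← Real.rpow_natCast (r ^ α) (i + 1), ← Real.rpow_mul hr0.le, ← Real.rpow_add hr0]
    congr 1
    push_cast
    ring
  rw [show 1 + i = i + 1 from Nat.add_comm 1 i, hxk, ← hrp]
  ring


theorem stmt18 (α δ θ p : ℝ) (b : ℕ) (hα : 2 < α) (hδ : δ = 2 / α) (hθ : 0 < θ)
    (hp0 : 0 ≤ p) (hp1 : p ≤ 1) (hb : 1 ≤ b) :
    (∫ r in Ioo (0 : ℝ) 1, (1 - (1 - p * θ * r ^ α / (1 + θ * r ^ α)) ^ b) * r ^ (-(3 : ℝ)))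
      = ∑ k ∈ Finset.Icc 1 b, (b.choose k : ℝ) * (-(-(p * θ)) ^ k / (k * α - 2)) *
          (((k : ℝ) - δ) * ∫ t in Ioo (0 : ℝ) 1, t ^ ((k : ℝ) - δ - 1) / (1 + θ * t) ^ k) := by
  have hα0 : (0:ℝ) < α := by linarith
  rw [setIntegral_congr_fun measurableSet_Ioo (fun r hr => expand_pt α θ p b hθ r hr)]
  rw [MeasureTheory.integral_finset_sum _
    (fun k hk => (integrable_term α θ hα hθ k (Finset.mem_Icc.mp hk).1).const_mul _)]
  apply Finset.sum_congr rfl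
  intro k hk
  have hk1 : 1 ≤ k := (Finset.mem_Icc.mp hk).1
  rw [MeasureTheory.integral_const_mul, hδ, subst_rpow α θ hα hθ k hk1]
  have hkR : (1:ℝ) ≤ (k:ℝ) := by exact_mod_cast hk1
  have hne : (k:ℝ) * α - 2 ≠ 0 := by nlinarith
  set I := ∫ r in Ioo (0:ℝ) 1, r ^ ((k:ℝ) * α - 3) / (1 + θ * r ^ α) ^ k with hI
  field_simp
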